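/- Let (A,X) and (B,Y) be featured graphs on n vertices with features in ℝ^d. Then there exists a doubly stochastic matrix S with ‖A·S − S·B‖ + Σ_{i,j} S_{i,j}·‖X_i − Y_j‖ = 0 (equivalently, d((A,X),(B,Y)) = 0, since the infimum is attained) if and only if (A,X) and (B,Y) are 1-WL equivalent. -/
import Mathlib


/-- A featured graph on `n` vertices: an adjacency matrix of a simple graph
(symmetric, 0/1 entries, zero diagonal) together with node features in `ℝ^d`. -/
structure FeaturedGraph (n d : ℕ) where
  A : Matrix (Fin n) (Fin n) ℝ
  X : Fin n → EuclideanSpace ℝ (Fin d)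
  isSymm : A.IsSymm
  zeroOne : ∀ i j, A i j = 0 ∨ A i j = 1
  loopless : ∀ i, A i i = 0

open Classical in
/-- The neighbor set of `u` in the simple graph with adjacency matrix `A`. -/
noncomputable def nbrs {n : ℕ} (A : Matrix (Fin n) (Fin n) ℝ) (u : Fin n) : Finset (Fin n) :=
  Finset.univ.filter fun z => A u z = 1

open Classical in
/-- The color refinement (1-WL) sequence of relations, for a vertex type `V` with
neighbor sets `N` and features `X`: `r 0 u v ↔ X u = X v`, and `r (t+1) u v` iff
`r t u v` and for every `w`, `u` and `v` have equally many neighbors `z` with `r t z w`. -/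
noncomputable def colorRefine {V F : Type*} (N : V → Finset V) (X : V → F) :
    ℕ → V → V → Prop
  | 0 => fun u v => X u = X v
  | t + 1 => fun u v => colorRefine N X t u v ∧
      ∀ w, ((N u).filter fun z => colorRefine N X t z w).card =
           ((N v).filter fun z => colorRefine N X t z w).card


/-- Neighbor sets in the disjoint union of the graphs given by `A` and `B`. -/
noncomputable def sumNbrs {n : ℕ} (A B : Matrix (Fin n) (Fin n) ℝ) :
    Fin n ⊕ Fin n → Finset (Fin n ⊕ Fin n)
  | Sum.inl i => (nbrs A i).image Sum.inl
  | Sum.inr j => (nbrs B j).image Sum.inr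

open Classical in
/-- Two featured graphs are 1-WL equivalent if every class of the stable color
refinement relation `r (2n)` on their disjoint union contains exactly as many
left-side as right-side vertices. -/
noncomputable def WLEquiv {n d : ℕ} (G H : FeaturedGraph n d) : Prop :=
  ∀ w : Fin n ⊕ Fin n,
    (Finset.univ.filter fun i : Fin n =>
      colorRefine (sumNbrs G.A H.A) (Sum.elim G.X H.X) (2 * n) (Sum.inl i) w).card =
    (Finset.univ.filter fun j : Fin n =>
      colorRefine (sumNbrs G.A H.A) (Sum.elim G.X H.X) (2 * n) (Sum.inr j) w).card

/-- A stable partition of a featured graph: a partition of the vertices into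
nonempty parts such that vertices in the same part have the same feature and the
same number of neighbors in every part. -/
def IsStablePartition {n d k : ℕ} (G : FeaturedGraph n d) (P : Fin k → Finset (Fin n)) : Prop :=
  (∀ t, (P t).Nonempty) ∧ (∀ i : Fin n, ∃! t, i ∈ P t) ∧
    ∀ t, ∀ u ∈ P t, ∀ v ∈ P t, G.X u = G.X v ∧
      ∀ l, (nbrs G.A u ∩ P l).card = (nbrs G.A v ∩ P l).card

/-- The ℓ² operator norm of a square real matrix. -/
noncomputable def l2OpNorm {n : ℕ} (M : Matrix (Fin n) (Fin n) ℝ) : ℝ :=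
  ‖Matrix.toEuclideanCLM (𝕜 := ℝ) M‖


section Aux
open Finset

namespace CR
variable {V F : Type*} (N : V → Finset V) (X : V → F)

open Classical in
lemma cr_succ (t : ℕ) (u v : V) : colorRefine N X (t+1) u v ↔
    colorRefine N X t u v ∧
      ∀ w, ((N u).filter fun z => colorRefine N X t z w).card =
           ((N v).filter fun z => colorRefine N X t z w).card := Iff.rfl

variable {N X}

lemma rfl' : ∀ t (u : V), colorRefine N X t u u
  | 0, _ => rfl
  | t+1, u => ⟨rfl' t u, fun _ => rfl⟩

lemma symm : ∀ {t} {u v : V}, colorRefine N X t u v → colorRefine N X t v u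
  | 0, _, _, h => h.symm
  | _+1, _, _, h => ⟨symm h.1, fun w => (h.2 w).symm⟩

lemma trans : ∀ {t} {u v w : V}, colorRefine N X t u v → colorRefine N X t v w →
    colorRefine N X t u w
  | 0, _, _, _, h, h' => h.trans h'
  | _+1, _, _, _, h, h' => ⟨trans h.1 h'.1, fun w => (h.2 w).trans (h'.2 w)⟩

lemma mono_le {s t : ℕ} (hst : s ≤ t) {u v : V} (h : colorRefine N X t u v) :
    colorRefine N X s u v := by
  induction t with
  | zero => simpa [Nat.le_zero.mp hst] using h
  | succ t ih =>
    rcases Nat.lt_or_ge s (t+1) with h' | h'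
    · exact ih (Nat.lt_succ_iff.mp h') h.1
    · have : s = t + 1 := le_antisymm hst h'
      simpa [this] using h

open Classical in
/-- If the relation is stable at `t`, it is stable at `t+1`. -/
lemma stable_step {t : ℕ} (h : ∀ u v : V, colorRefine N X t u v ↔ colorRefine N X (t+1) u v)
    (u v : V) : colorRefine N X (t+1) u v ↔ colorRefine N X (t+2) u v := by
  constructor
  · intro h1
    refine ⟨h1, fun w => ?_⟩
    have e1 : ∀ s : Finset V, (s.filter fun z => colorRefine N X (t+1) z w) =
        (s.filter fun z => colorRefine N X t z w) := by
      intro s; apply Finset.filter_congr; intro z _; exact (h z w).symm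
    rw [e1, e1]
    exact h1.2 w
  · exact fun h2 => h2.1

lemma stable_of_stable_le {t s : ℕ} (hts : t ≤ s)
    (h : ∀ u v : V, colorRefine N X t u v ↔ colorRefine N X (t+1) u v) :
    ∀ u v : V, colorRefine N X s u v ↔ colorRefine N X (s+1) u v := by
  induction s with
  | zero =>
    have : t = 0 := Nat.le_zero.mp hts
    subst this; exact h
  | succ s ih =>
    rcases Nat.lt_or_ge t (s+1) with h' | h'
    · exact stable_step (ih (Nat.lt_succ_iff.mp h'))
    · have : t = s + 1 := le_antisymm hts h'
      subst this; exact h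

end CR

lemma card_image_le_of_factor {α β : Type*} [Fintype α] [DecidableEq β] (f g : α → β)
    (h : ∀ x y, g x = g y → f x = f y) :
    (Finset.univ.image f).card ≤ (Finset.univ.image g).card := by
  classical
  set φ : β → β := fun b => if hb : ∃ x, g x = b then f hb.choose else b with hφ
  have key : ∀ x, φ (g x) = f x := by
    intro x
    have hb : ∃ y, g y = g x := ⟨x, rfl⟩
    simp only [hφ, dif_pos hb]
    exact h _ _ hb.choose_spec
  have : (Finset.univ.image f) = (Finset.univ.image g).image φ := by
    ext b
    simp only [Finset.mem_image, Finset.mem_univ, true_and, exists_exists_eq_and]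
    constructor
    · rintro ⟨x, rfl⟩; exact ⟨x, key x⟩
    · rintro ⟨x, rfl⟩; exact ⟨x, (key x).symm⟩
  rw [this]
  exact Finset.card_image_le

lemma card_image_lt_of_factor {α β : Type*} [Fintype α] [DecidableEq β] (f g : α → β)
    (h : ∀ x y, g x = g y → f x = f y) {x0 y0 : α}
    (hf : f x0 = f y0) (hg : g x0 ≠ g y0) :
    (Finset.univ.image f).card < (Finset.univ.image g).card := by
  classical
  set φ : β → β := fun b => if hb : ∃ x, g x = b then f hb.choose else b with hφ
  have key : ∀ x, φ (g x) = f x := by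
    intro x
    have hb : ∃ y, g y = g x := ⟨x, rfl⟩
    simp only [hφ, dif_pos hb]
    exact h _ _ hb.choose_spec
  have hsub : (Finset.univ.image f) ⊆ ((Finset.univ.image g).erase (g y0)).image φ := by
    intro b hb
    rw [Finset.mem_image] at hb
    obtain ⟨x, _, rfl⟩ := hb
    by_cases hx : g x = g y0
    · refine Finset.mem_image.mpr ⟨g x0, ?_, ?_⟩
      · exact Finset.mem_erase.mpr ⟨hg, Finset.mem_image_of_mem _ (Finset.mem_univ _)⟩
      · rw [key x0, hf, ← h _ _ hx]
    · exact Finset.mem_image.mpr ⟨g x, Finset.mem_erase.mpr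
        ⟨hx, Finset.mem_image_of_mem _ (Finset.mem_univ _)⟩, key x⟩
  calc (Finset.univ.image f).card ≤ (((Finset.univ.image g).erase (g y0)).image φ).card :=
        Finset.card_le_card hsub
    _ ≤ ((Finset.univ.image g).erase (g y0)).card := Finset.card_image_le
    _ < (Finset.univ.image g).card :=
        Finset.card_erase_lt_of_mem (Finset.mem_image_of_mem _ (Finset.mem_univ _))

namespace CR
variable {V F : Type*} [Fintype V] {N : V → Finset V} {X : V → F}

open Classical in
/-- The color refinement relation is stable after `card V` steps. -/
lemma stable_card {m : ℕ} (hm : Fintype.card V ≤ m) (u v : V) :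
    colorRefine N X m u v ↔ colorRefine N X (m+1) u v := by
  classical
  by_cases hV : Nonempty V
  swap
  · exact (not_nonempty_iff.mp hV).elim u
  by_contra hcon
  -- no stabilization at any t < m (else it would propagate to m)
  have hstep : ∀ t, t < m → ∃ u v : V, colorRefine N X t u v ∧ ¬ colorRefine N X (t+1) u v := by
    intro t ht
    by_contra hc
    push_neg at hc
    have hst : ∀ u v : V, colorRefine N X t u v ↔ colorRefine N X (t+1) u v := by
      intro u v
      exact ⟨hc u v, fun h' => h'.1⟩
    exact hcon (stable_of_stable_le (le_of_lt ht) hst u v)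
  -- class count strictly increases
  set π : ℕ → V → Finset V := fun t v => Finset.univ.filter fun u => colorRefine N X t u v
    with hπ
  have hfac : ∀ t, ∀ x y : V, π (t+1) x = π (t+1) y → π t x = π t y := by
    intro t x y hxy
    have hx : x ∈ π (t+1) y := by
      rw [← hxy]; simp only [hπ, Finset.mem_filter, Finset.mem_univ, true_and]
      exact rfl' _ x
    have hr : colorRefine N X (t+1) x y := by
      simpa only [hπ, Finset.mem_filter, Finset.mem_univ, true_and] using hx
    ext z
    simp only [hπ, Finset.mem_filter, Finset.mem_univ, true_and]
    exact ⟨fun hz => trans hz hr.1, fun hz => trans hz (symm hr.1)⟩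
  have hlt : ∀ t, t < m → (Finset.univ.image (π t)).card < (Finset.univ.image (π (t+1))).card := by
    intro t ht
    obtain ⟨x0, y0, hr, hnr⟩ := hstep t ht
    refine card_image_lt_of_factor _ _ (hfac t) (x0 := x0) (y0 := y0) ?_ ?_
    · ext z
      simp only [hπ, Finset.mem_filter, Finset.mem_univ, true_and]
      exact ⟨fun hz => trans hz hr, fun hz => trans hz (symm hr)⟩
    · intro hxy
      apply hnr
      have : x0 ∈ π (t+1) y0 := by
        rw [← hxy]; simp only [hπ, Finset.mem_filter, Finset.mem_univ, true_and]
        exact rfl' _ x0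
      simpa only [hπ, Finset.mem_filter, Finset.mem_univ, true_and] using this
  have hge : ∀ t, t ≤ m → t + 1 ≤ (Finset.univ.image (π t)).card := by
    intro t
    induction t with
    | zero =>
      intro _
      obtain ⟨x⟩ := hV
      have : π 0 x ∈ Finset.univ.image (π 0) := Finset.mem_image_of_mem _ (Finset.mem_univ x)
      exact Finset.card_pos.mpr ⟨_, this⟩
    | succ t iht =>
      intro hts
      have h1 := iht (le_of_lt (Nat.lt_of_succ_le hts))
      have h2 := hlt t (Nat.lt_of_succ_le hts)
      omega
  have hle : (Finset.univ.image (π m)).card ≤ Fintype.card V := by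
    calc (Finset.univ.image (π m)).card ≤ Finset.univ.card := Finset.card_image_le
      _ = Fintype.card V := Finset.card_univ
  have := hge m le_rfl
  omega

end CR
end Aux


open Finset in
/-- Quadratic-form trick: if `a = S b` and `b = Sᵀ a` for a doubly stochastic `S`,
then `a i = b j` wherever `S i j ≠ 0`. -/
lemma ds_transfer {n : ℕ} {S : Matrix (Fin n) (Fin n) ℝ}
    (hS : S ∈ doublyStochastic ℝ (Fin n)) {a b : Fin n → ℝ}
    (hab : ∀ i, a i = ∑ j, S i j * b j) (hba : ∀ j, b j = ∑ i, S i j * a i)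
    {i j : Fin n} (hij : S i j ≠ 0) : a i = b j := by
  obtain ⟨hpos, hrow, hcol⟩ := mem_doublyStochastic_iff_sum.mp hS
  have e1 : ∑ i', ∑ j', S i' j' * a i' ^ 2 = ∑ i', a i' ^ 2 := by
    refine Finset.sum_congr rfl fun i' _ => ?_
    rw [← Finset.sum_mul, hrow i', one_mul]
  have e2 : ∑ i', ∑ j', S i' j' * b j' ^ 2 = ∑ j', b j' ^ 2 := by
    rw [Finset.sum_comm]
    refine Finset.sum_congr rfl fun j' _ => ?_
    rw [← Finset.sum_mul, hcol j', one_mul]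
  have e3 : ∑ i', ∑ j', S i' j' * (a i' * b j') = ∑ i', a i' ^ 2 := by
    refine Finset.sum_congr rfl fun i' _ => ?_
    have : ∀ j', S i' j' * (a i' * b j') = a i' * (S i' j' * b j') := fun _ => by ring
    simp only [this, ← Finset.mul_sum, ← hab i']
    ring
  have e4 : ∑ i', ∑ j', S i' j' * (a i' * b j') = ∑ j', b j' ^ 2 := by
    rw [Finset.sum_comm]
    refine Finset.sum_congr rfl fun j' _ => ?_
    have : ∀ i', S i' j' * (a i' * b j') = b j' * (S i' j' * a i') := fun _ => by ring
    simp only [this, ← Finset.mul_sum, ← hba j']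
    ring
  have hE : ∑ i', ∑ j', S i' j' * (a i' - b j') ^ 2 = 0 := by
    have expand : ∀ i' j', S i' j' * (a i' - b j') ^ 2 =
        S i' j' * a i' ^ 2 - 2 * (S i' j' * (a i' * b j')) + S i' j' * b j' ^ 2 :=
      fun _ _ => by ring
    simp only [expand, Finset.sum_add_distrib, Finset.sum_sub_distrib, ← Finset.mul_sum]
    rw [e1, e2, e3]
    have : ∑ i', ∑ j', S i' j' * (a i' * b j') = ∑ j', b j' ^ 2 := e4
    rw [e3] at this
    rw [this]
    ring
  have hterm : ∀ i' ∈ Finset.univ, ∀ j' ∈ Finset.univ, (0:ℝ) ≤ S i' j' * (a i' - b j') ^ 2 :=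
    fun i' _ j' _ => mul_nonneg (hpos i' j') (sq_nonneg _)
  have h0 : S i j * (a i - b j) ^ 2 = 0 := by
    have h1 := (Finset.sum_eq_zero_iff_of_nonneg
      (fun i' _ => Finset.sum_nonneg (fun j' hj' => hterm i' (Finset.mem_univ i') j' hj'))).mp
      hE i (Finset.mem_univ i)
    exact (Finset.sum_eq_zero_iff_of_nonneg
      (fun j' hj' => hterm i (Finset.mem_univ i) j' hj')).mp h1 j (Finset.mem_univ j)
  have := mul_eq_zero.mp h0
  rcases this with h | h
  · exact absurd h hij
  · have := sq_eq_zero_iff.mp h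
    linarith [sub_eq_zero.mp this]

open Classical in
/-- Summing a 0/1 row over a predicate counts filtered neighbors. -/
lemma row_sum_card {n : ℕ} {A : Matrix (Fin n) (Fin n) ℝ}
    (h01 : ∀ i j, A i j = 0 ∨ A i j = 1) (i : Fin n) (p : Fin n → Prop) :
    ∑ k, (if p k then A i k else 0) = (((nbrs A i).filter p).card : ℝ) := by
  have h : ∀ k, (if p k then A i k else 0) = if (A i k = 1 ∧ p k) then (1:ℝ) else 0 := by
    intro k
    rcases h01 i k with h | h <;> by_cases hp : p k <;> simp [h, hp]
  rw [Finset.sum_congr rfl fun k _ => h k, Finset.sum_boole, nbrs, Finset.filter_filter]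

open Classical in
lemma card_filter_image {α β : Type*} [DecidableEq β] (f : α → β) (hf : Function.Injective f)
    (s : Finset α) (p : β → Prop) :
    ((s.image f).filter p).card = (s.filter fun a => p (f a)).card := by
  classical
  rw [Finset.filter_image, Finset.card_image_of_injective _ hf]

open Classical in
lemma card_filter_sum {α β : Type*} [Fintype α] [Fintype β] (p : α ⊕ β → Prop) :
    (Finset.univ.filter p).card =
      (Finset.univ.filter fun a => p (Sum.inl a)).card +
      (Finset.univ.filter fun b => p (Sum.inr b)).card := by
  classical
  simp only [Finset.card_filter]
  rw [Fintype.sum_sum_type]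

/-- Double counting edges between two vertex sets, for a symmetric neighbor relation. -/
lemma sum_card_nbrs_comm {V : Type*} [Fintype V] [DecidableEq V] (N : V → Finset V)
    (hsym : ∀ u v, u ∈ N v ↔ v ∈ N u) (C D : Finset V) :
    ∑ u ∈ C, ((N u).filter (· ∈ D)).card = ∑ v ∈ D, ((N v).filter (· ∈ C)).card := by
  classical
  have key : ∀ (C D : Finset V) (u : V), ((N u).filter (· ∈ D)).card =
      ∑ v ∈ D, if v ∈ N u then 1 else 0 := by
    intro C D u
    rw [Finset.filter_mem_eq_inter, Finset.inter_comm, ← Finset.filter_mem_eq_inter,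
      Finset.card_filter]
  simp only [key C D, key D C]
  rw [Finset.sum_comm]
  refine Finset.sum_congr rfl fun v _ => Finset.sum_congr rfl fun u _ => ?_
  simp [hsym u v]


lemma sumNbrs_symm {n d : ℕ} (G H : FeaturedGraph n d) (u v : Fin n ⊕ Fin n) :
    u ∈ sumNbrs G.A H.A v ↔ v ∈ sumNbrs G.A H.A u := by
  classical
  have hG : ∀ i k, G.A i k = G.A k i := fun i k => Matrix.IsSymm.apply G.isSymm k i
  have hH : ∀ i k, H.A i k = H.A k i := fun i k => Matrix.IsSymm.apply H.isSymm k i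
  rcases u with i | i <;> rcases v with k | k <;>
    simp [sumNbrs, nbrs, Finset.mem_image, hG i k, hH i k]

open Classical Finset in
lemma wl_of_fractional {n d : ℕ} (G H : FeaturedGraph n d) (S : Matrix (Fin n) (Fin n) ℝ)
    (hS : S ∈ doublyStochastic ℝ (Fin n)) (hAS : G.A * S = S * H.A)
    (hfeat : ∀ i j, S i j ≠ 0 → G.X i = H.X j) : WLEquiv G H := by
  classical
  obtain ⟨hpos, hrow, hcol⟩ := mem_doublyStochastic_iff_sum.mp hS
  set Nb := sumNbrs G.A H.A with hNb
  set Xf := Sum.elim G.X H.X with hXf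
  have key : ∀ t (i j : Fin n), S i j ≠ 0 → colorRefine Nb Xf t (Sum.inl i) (Sum.inr j) := by
    intro t
    induction t with
    | zero => intro i j hij; exact hfeat i j hij
    | succ t iht =>
      intro i j hij
      have hchir : ∀ (w : Fin n ⊕ Fin n) (k : Fin n),
          ∑ j' ∈ univ.filter (fun j' => colorRefine Nb Xf t (Sum.inr j') w), S k j' =
            if colorRefine Nb Xf t (Sum.inl k) w then 1 else 0 := by
        intro w k
        by_cases hk : colorRefine Nb Xf t (Sum.inl k) w
        · rw [if_pos hk, ← hrow k]
          apply Finset.sum_subset (Finset.subset_univ _)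
          intro j' _ hj'
          by_contra hS0
          apply hj'
          simp only [Finset.mem_filter, Finset.mem_univ, true_and]
          exact CR.trans (CR.symm (iht k j' hS0)) hk
        · rw [if_neg hk]
          apply Finset.sum_eq_zero
          intro j' hj'
          simp only [Finset.mem_filter, Finset.mem_univ, true_and] at hj'
          by_contra hS0
          exact hk (CR.trans (iht k j' hS0) hj')
      have hchic : ∀ (w : Fin n ⊕ Fin n) (k : Fin n),
          ∑ i' ∈ univ.filter (fun i' => colorRefine Nb Xf t (Sum.inl i') w), S i' k =
            if colorRefine Nb Xf t (Sum.inr k) w then 1 else 0 := by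
        intro w k
        by_cases hk : colorRefine Nb Xf t (Sum.inr k) w
        · rw [if_pos hk, ← hcol k]
          apply Finset.sum_subset (Finset.subset_univ _)
          intro i' _ hi'
          by_contra hS0
          apply hi'
          simp only [Finset.mem_filter, Finset.mem_univ, true_and]
          exact CR.trans (iht i' k hS0) hk
        · rw [if_neg hk]
          apply Finset.sum_eq_zero
          intro i' hi'
          simp only [Finset.mem_filter, Finset.mem_univ, true_and] at hi'
          by_contra hS0
          exact hk (CR.trans (CR.symm (iht i' k hS0)) hi')
      refine ⟨iht i j hij, fun w => ?_⟩
      set a : Fin n → ℝ := fun k =>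
        (((nbrs G.A k).filter fun z => colorRefine Nb Xf t (Sum.inl z) w).card : ℝ) with ha
      set b : Fin n → ℝ := fun k =>
        (((nbrs H.A k).filter fun z => colorRefine Nb Xf t (Sum.inr z) w).card : ℝ) with hb
      have hab : ∀ i', a i' = ∑ k, S i' k * b k := by
        intro i'
        have hsum : ∑ j' ∈ univ.filter (fun j' => colorRefine Nb Xf t (Sum.inr j') w),
            (G.A * S) i' j' =
            ∑ j' ∈ univ.filter (fun j' => colorRefine Nb Xf t (Sum.inr j') w),
            (S * H.A) i' j' := by rw [hAS]
        have hL : ∑ j' ∈ univ.filter (fun j' => colorRefine Nb Xf t (Sum.inr j') w),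
            (G.A * S) i' j' = a i' := by
          simp only [Matrix.mul_apply]
          rw [Finset.sum_comm]
          have : ∀ k, ∑ j' ∈ univ.filter (fun j' => colorRefine Nb Xf t (Sum.inr j') w),
              G.A i' k * S k j' =
              (if colorRefine Nb Xf t (Sum.inl k) w then G.A i' k else 0) := by
            intro k
            rw [← Finset.mul_sum, hchir w k]
            split <;> ring
          rw [Finset.sum_congr rfl fun k _ => this k, row_sum_card G.zeroOne]
        have hR : ∑ j' ∈ univ.filter (fun j' => colorRefine Nb Xf t (Sum.inr j') w),
            (S * H.A) i' j' = ∑ k, S i' k * b k := by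
          simp only [Matrix.mul_apply]
          rw [Finset.sum_comm]
          refine Finset.sum_congr rfl fun k _ => ?_
          rw [← Finset.mul_sum, Finset.sum_filter, row_sum_card H.zeroOne]
        rw [← hL, hsum, hR]
      have hba : ∀ j', b j' = ∑ k, S k j' * a k := by
        intro j'
        have hsum : ∑ i' ∈ univ.filter (fun i' => colorRefine Nb Xf t (Sum.inl i') w),
            (G.A * S) i' j' =
            ∑ i' ∈ univ.filter (fun i' => colorRefine Nb Xf t (Sum.inl i') w),
            (S * H.A) i' j' := by rw [hAS]
        have hL : ∑ i' ∈ univ.filter (fun i' => colorRefine Nb Xf t (Sum.inl i') w),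
            (G.A * S) i' j' = ∑ k, S k j' * a k := by
          simp only [Matrix.mul_apply]
          rw [Finset.sum_comm]
          refine Finset.sum_congr rfl fun k _ => ?_
          have : ∀ i', G.A i' k * S k j' = S k j' * G.A k i' := by
            intro i'
            rw [Matrix.IsSymm.apply G.isSymm k i']
            ring
          rw [Finset.sum_congr rfl fun i' _ => this i', ← Finset.mul_sum,
            Finset.sum_filter, row_sum_card G.zeroOne]
        have hR : ∑ i' ∈ univ.filter (fun i' => colorRefine Nb Xf t (Sum.inl i') w),
            (S * H.A) i' j' = b j' := by
          simp only [Matrix.mul_apply]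
          rw [Finset.sum_comm]
          have : ∀ k, ∑ i' ∈ univ.filter (fun i' => colorRefine Nb Xf t (Sum.inl i') w),
              S i' k * H.A k j' =
              (if colorRefine Nb Xf t (Sum.inr k) w then H.A j' k else 0) := by
            intro k
            rw [← Finset.sum_mul, hchic w k, Matrix.IsSymm.apply H.isSymm k j']
            split <;> ring
          rw [Finset.sum_congr rfl fun k _ => this k, row_sum_card H.zeroOne]
        rw [← hR, ← hsum, hL]
      have hmain : a i = b j := ds_transfer hS hab hba hij
      have lhs : ((Nb (Sum.inl i)).filter fun z => colorRefine Nb Xf t z w).card =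
          ((nbrs G.A i).filter fun z => colorRefine Nb Xf t (Sum.inl z) w).card := by
        rw [hNb]
        show (((nbrs G.A i).image Sum.inl).filter _).card = _
        exact card_filter_image Sum.inl Sum.inl_injective _ _
      have rhs : ((Nb (Sum.inr j)).filter fun z => colorRefine Nb Xf t z w).card =
          ((nbrs H.A j).filter fun z => colorRefine Nb Xf t (Sum.inr z) w).card := by
        rw [hNb]
        show (((nbrs H.A j).image Sum.inr).filter _).card = _
        exact card_filter_image Sum.inr Sum.inr_injective _ _
      rw [lhs, rhs]
      have hmain' := hmain
      simp only [ha, hb] at hmain'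
      exact_mod_cast hmain'
  -- conclude WL equivalence from `key (2 * n)`
  intro w
  set Lw := univ.filter (fun i : Fin n => colorRefine Nb Xf (2 * n) (Sum.inl i) w) with hLw
  set Rw := univ.filter (fun j : Fin n => colorRefine Nb Xf (2 * n) (Sum.inr j) w) with hRw
  have hLR : ∀ i ∈ Lw, ∑ j, S i j = ∑ j ∈ Rw, S i j := by
    intro i hi
    simp only [hLw, Finset.mem_filter, Finset.mem_univ, true_and] at hi
    symm
    apply Finset.sum_subset (Finset.subset_univ _)
    intro j _ hj
    by_contra hS0
    apply hj
    simp only [hRw, Finset.mem_filter, Finset.mem_univ, true_and]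
    exact CR.trans (CR.symm (key (2 * n) i j hS0)) hi
  have hRL : ∀ j ∈ Rw, ∑ i, S i j = ∑ i ∈ Lw, S i j := by
    intro j hj
    simp only [hRw, Finset.mem_filter, Finset.mem_univ, true_and] at hj
    symm
    apply Finset.sum_subset (Finset.subset_univ _)
    intro i _ hi
    by_contra hS0
    apply hi
    simp only [hLw, Finset.mem_filter, Finset.mem_univ, true_and]
    exact CR.trans (key (2 * n) i j hS0) hj
  have hcast : (Lw.card : ℝ) = (Rw.card : ℝ) := by
    calc (Lw.card : ℝ) = ∑ i ∈ Lw, (1:ℝ) := by rw [Finset.sum_const, nsmul_eq_mul, mul_one]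
      _ = ∑ i ∈ Lw, ∑ j ∈ Rw, S i j := by
          refine Finset.sum_congr rfl fun i hi => ?_
          rw [← hLR i hi, hrow i]
      _ = ∑ j ∈ Rw, ∑ i ∈ Lw, S i j := Finset.sum_comm
      _ = ∑ j ∈ Rw, (1:ℝ) := by
          refine Finset.sum_congr rfl fun j hj => ?_
          rw [← hRL j hj, hcol j]
      _ = (Rw.card : ℝ) := by rw [Finset.sum_const, nsmul_eq_mul, mul_one]
  exact_mod_cast hcast


open Classical Finset in
lemma fractional_of_wl {n d : ℕ} (G H : FeaturedGraph n d) (hWL : WLEquiv G H) :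
    ∃ S ∈ doublyStochastic ℝ (Fin n),
      l2OpNorm (G.A * S - S * H.A) + ∑ i, ∑ j, S i j * ‖G.X i - H.X j‖ = 0 := by
  classical
  set Nb := sumNbrs G.A H.A with hNb
  set Xf : Fin n ⊕ Fin n → EuclideanSpace ℝ (Fin d) := Sum.elim G.X H.X with hXf
  set m := 2 * n with hm
  have hcard : Fintype.card (Fin n ⊕ Fin n) ≤ m := by
    simp [hm, two_mul]
  have hstab : ∀ u v, colorRefine Nb Xf m u v ↔ colorRefine Nb Xf (m+1) u v :=
    CR.stable_card hcard
  set c : (Fin n ⊕ Fin n) → ℕ := fun w =>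
    (univ.filter fun i : Fin n => colorRefine Nb Xf m (Sum.inl i) w).card with hc
  have hWL' : ∀ w, c w =
      (univ.filter fun j : Fin n => colorRefine Nb Xf m (Sum.inr j) w).card := hWL
  have hcl : ∀ i : Fin n, 0 < c (Sum.inl i) := by
    intro i
    refine Finset.card_pos.mpr ⟨i, ?_⟩
    simp only [Finset.mem_filter, Finset.mem_univ, true_and]
    exact CR.rfl' m _
  have hcr : ∀ j : Fin n, 0 < c (Sum.inr j) := by
    intro j
    rw [hWL' (Sum.inr j)]
    refine Finset.card_pos.mpr ⟨j, ?_⟩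
    simp only [Finset.mem_filter, Finset.mem_univ, true_and]
    exact CR.rfl' m _
  have hccongr : ∀ u v, colorRefine Nb Xf m u v → c u = c v := by
    intro u v huv
    show (univ.filter fun i : Fin n => colorRefine Nb Xf m (Sum.inl i) u).card = _
    congr 1
    apply Finset.filter_congr
    intro i _
    exact ⟨fun h => CR.trans h huv, fun h => CR.trans h (CR.symm huv)⟩
  set S : Matrix (Fin n) (Fin n) ℝ := Matrix.of fun i j =>
    if colorRefine Nb Xf m (Sum.inl i) (Sum.inr j) then ((c (Sum.inl i) : ℝ))⁻¹ else 0
    with hSdef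
  have hSapp : ∀ i j, S i j =
      if colorRefine Nb Xf m (Sum.inl i) (Sum.inr j) then ((c (Sum.inl i) : ℝ))⁻¹ else 0 :=
    fun i j => rfl
  have hmem : S ∈ doublyStochastic ℝ (Fin n) := by
    rw [mem_doublyStochastic_iff_sum]
    refine ⟨fun i j => ?_, fun i => ?_, fun j => ?_⟩
    · rw [hSapp]
      split
      · positivity
      · exact le_refl 0
    · -- row sums
      have : ∀ j, S i j = if colorRefine Nb Xf m (Sum.inl i) (Sum.inr j)
          then ((c (Sum.inl i) : ℝ))⁻¹ else 0 := fun j => hSapp i j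
      rw [Finset.sum_congr rfl fun j _ => this j, ← Finset.sum_filter, Finset.sum_const,
        nsmul_eq_mul]
      have hcount : (univ.filter fun j => colorRefine Nb Xf m (Sum.inl i) (Sum.inr j)).card =
          c (Sum.inl i) := by
        rw [hWL' (Sum.inl i)]
        congr 1
        apply Finset.filter_congr
        intro j _
        exact ⟨CR.symm, CR.symm⟩
      rw [hcount]
      exact mul_inv_cancel₀ (by exact_mod_cast (hcl i).ne')
    · -- column sums
      have : ∀ i, S i j = if colorRefine Nb Xf m (Sum.inl i) (Sum.inr j)
          then ((c (Sum.inl i) : ℝ))⁻¹ else 0 := fun i => hSapp i j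
      rw [Finset.sum_congr rfl fun i _ => this i, ← Finset.sum_filter]
      have hconst : ∀ i ∈ univ.filter fun i => colorRefine Nb Xf m (Sum.inl i) (Sum.inr j),
          ((c (Sum.inl i) : ℝ))⁻¹ = ((c (Sum.inr j) : ℝ))⁻¹ := by
        intro i hi
        simp only [Finset.mem_filter, Finset.mem_univ, true_and] at hi
        rw [hccongr _ _ hi]
      rw [Finset.sum_congr rfl hconst, Finset.sum_const, nsmul_eq_mul]
      have hcount : (univ.filter fun i => colorRefine Nb Xf m (Sum.inl i) (Sum.inr j)).card =
          c (Sum.inr j) := rfl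
      rw [hcount]
      exact mul_inv_cancel₀ (by exact_mod_cast (hcr j).ne')
  have hAS : G.A * S = S * H.A := by
    ext i j
    have hL : (G.A * S) i j =
        (((nbrs G.A i).filter fun k => colorRefine Nb Xf m (Sum.inl k) (Sum.inr j)).card : ℝ)
          * ((c (Sum.inr j) : ℝ))⁻¹ := by
      rw [Matrix.mul_apply]
      have : ∀ k, G.A i k * S k j =
          (if colorRefine Nb Xf m (Sum.inl k) (Sum.inr j) then G.A i k else 0)
            * ((c (Sum.inr j) : ℝ))⁻¹ := by
        intro k
        rw [hSapp]
        by_cases h : colorRefine Nb Xf m (Sum.inl k) (Sum.inr j)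
        · rw [if_pos h, if_pos h, hccongr _ _ h]
        · rw [if_neg h, if_neg h, mul_zero, zero_mul]
      rw [Finset.sum_congr rfl fun k _ => this k, ← Finset.sum_mul,
        row_sum_card G.zeroOne]
    have hR : (S * H.A) i j =
        (((nbrs H.A j).filter fun k => colorRefine Nb Xf m (Sum.inl i) (Sum.inr k)).card : ℝ)
          * ((c (Sum.inl i) : ℝ))⁻¹ := by
      rw [Matrix.mul_apply]
      have : ∀ k, S i k * H.A k j =
          (if colorRefine Nb Xf m (Sum.inl i) (Sum.inr k) then H.A j k else 0)
            * ((c (Sum.inl i) : ℝ))⁻¹ := by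
        intro k
        rw [hSapp, Matrix.IsSymm.apply H.isSymm k j]
        by_cases h : colorRefine Nb Xf m (Sum.inl i) (Sum.inr k)
        · rw [if_pos h, if_pos h]; ring
        · rw [if_neg h, if_neg h, zero_mul, zero_mul]
      rw [Finset.sum_congr rfl fun k _ => this k, ← Finset.sum_mul,
        row_sum_card H.zeroOne]
    rw [hL, hR]
    -- the counting identity
    set α := ((nbrs G.A i).filter fun k => colorRefine Nb Xf m (Sum.inl k) (Sum.inr j)).card
      with hα
    set β := ((nbrs H.A j).filter fun k => colorRefine Nb Xf m (Sum.inl i) (Sum.inr k)).card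
      with hβ
    set C := univ.filter fun z : Fin n ⊕ Fin n => colorRefine Nb Xf m z (Sum.inl i) with hC
    set D := univ.filter fun z : Fin n ⊕ Fin n => colorRefine Nb Xf m z (Sum.inr j) with hD
    have hCcard : C.card = 2 * c (Sum.inl i) := by
      rw [hC, card_filter_sum, two_mul]
      congr 1
      exact (hWL' (Sum.inl i)).symm
    have hDcard : D.card = 2 * c (Sum.inr j) := by
      rw [hD, card_filter_sum, two_mul]
      congr 1
      exact (hWL' (Sum.inr j)).symm
    have hsym : ∀ u v, u ∈ Nb v ↔ v ∈ Nb u := fun u v => sumNbrs_symm G H u v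
    -- constancy over classes, via stability
    have hconstC : ∀ u ∈ C, ((Nb u).filter (· ∈ D)).card =
        ((Nb (Sum.inl i)).filter fun z => colorRefine Nb Xf m z (Sum.inr j)).card := by
      intro u hu
      simp only [hC, Finset.mem_filter, Finset.mem_univ, true_and] at hu
      have hst := ((hstab u (Sum.inl i)).mp hu).2 (Sum.inr j)
      rw [← hst]
      congr 1
      apply Finset.filter_congr
      intro z _
      simp only [hD, Finset.mem_filter, Finset.mem_univ, true_and]
    have hconstD : ∀ u ∈ D, ((Nb u).filter (· ∈ C)).card =
        ((Nb (Sum.inr j)).filter fun z => colorRefine Nb Xf m z (Sum.inl i)).card := by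
      intro u hu
      simp only [hD, Finset.mem_filter, Finset.mem_univ, true_and] at hu
      have hst := ((hstab u (Sum.inr j)).mp hu).2 (Sum.inl i)
      rw [← hst]
      congr 1
      apply Finset.filter_congr
      intro z _
      simp only [hC, Finset.mem_filter, Finset.mem_univ, true_and]
    have hdouble := sum_card_nbrs_comm Nb hsym C D
    rw [Finset.sum_congr rfl hconstC, Finset.sum_congr rfl hconstD, Finset.sum_const,
      Finset.sum_const, smul_eq_mul, smul_eq_mul, hCcard, hDcard] at hdouble
    have hαeq : ((Nb (Sum.inl i)).filter fun z => colorRefine Nb Xf m z (Sum.inr j)).card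
        = α := by
      rw [hNb]
      show (((nbrs G.A i).image Sum.inl).filter _).card = _
      rw [card_filter_image Sum.inl Sum.inl_injective]
    have hβeq : ((Nb (Sum.inr j)).filter fun z => colorRefine Nb Xf m z (Sum.inl i)).card
        = β := by
      rw [hNb]
      show (((nbrs H.A j).image Sum.inr).filter _).card = _
      rw [card_filter_image Sum.inr Sum.inr_injective]
      rw [hβ]
      congr 1
      apply Finset.filter_congr
      intro k _
      exact ⟨fun h => CR.symm h, fun h => CR.symm h⟩
    rw [hαeq, hβeq] at hdouble
    -- hdouble : 2 * c (inl i) * α = 2 * c (inr j) * β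
    have h1 : (c (Sum.inl i) : ℝ) ≠ 0 := by exact_mod_cast (hcl i).ne'
    have h2 : (c (Sum.inr j) : ℝ) ≠ 0 := by exact_mod_cast (hcr j).ne'
    field_simp
    have : (2 : ℝ) * (c (Sum.inl i)) * α = 2 * (c (Sum.inr j)) * β := by
      exact_mod_cast hdouble
    linarith
  refine ⟨S, hmem, ?_⟩
  rw [hAS, sub_self]
  have hnorm : l2OpNorm (0 : Matrix (Fin n) (Fin n) ℝ) = 0 := by
    rw [l2OpNorm, map_zero, norm_zero]
  rw [hnorm, zero_add]
  apply Finset.sum_eq_zero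
  intro i _
  apply Finset.sum_eq_zero
  intro j _
  rw [hSapp]
  split
  · next h =>
    have h0 : colorRefine Nb Xf 0 (Sum.inl i) (Sum.inr j) := CR.mono_le (Nat.zero_le m) h
    have hx : G.X i = H.X j := h0
    rw [hx, sub_self, norm_zero, mul_zero]
  · rw [zero_mul]

/-- The objective of the graph pseudo-metric vanishes at some doubly stochastic
matrix iff the two featured graphs are 1-WL equivalent. -/
theorem graphDist_eq_zero_iff_wlEquiv {n d : ℕ} (G H : FeaturedGraph n d) :
    (∃ S ∈ doublyStochastic ℝ (Fin n),
        l2OpNorm (G.A * S - S * H.A) + ∑ i, ∑ j, S i j * ‖G.X i - H.X j‖ = 0) ↔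
      WLEquiv G H := by
  constructor
  · rintro ⟨S, hS, hsum⟩
    have h1 : (0:ℝ) ≤ l2OpNorm (G.A * S - S * H.A) := norm_nonneg _
    have h2 : (0:ℝ) ≤ ∑ i, ∑ j, S i j * ‖G.X i - H.X j‖ :=
      Finset.sum_nonneg fun i _ => Finset.sum_nonneg fun j _ =>
        mul_nonneg (nonneg_of_mem_doublyStochastic hS) (norm_nonneg _)
    have hA0 : l2OpNorm (G.A * S - S * H.A) = 0 := by linarith
    have hs0 : ∑ i, ∑ j, S i j * ‖G.X i - H.X j‖ = 0 := by linarith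
    have hMzero : G.A * S - S * H.A = 0 := by
      have h := norm_eq_zero.mp hA0
      have := (Matrix.toEuclideanCLM (𝕜 := ℝ) (n := Fin n)).injective
        (by rw [h, map_zero] : Matrix.toEuclideanCLM (𝕜 := ℝ) (G.A * S - S * H.A) =
          Matrix.toEuclideanCLM (𝕜 := ℝ) 0)
      exact this
    have hAS : G.A * S = S * H.A := sub_eq_zero.mp hMzero
    have hfeat : ∀ i j, S i j ≠ 0 → G.X i = H.X j := by
      intro i j hij
      have hin := (Finset.sum_eq_zero_iff_of_nonneg fun i' _ =>
        Finset.sum_nonneg fun j' _ =>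
          mul_nonneg (nonneg_of_mem_doublyStochastic hS) (norm_nonneg _)).mp hs0
        i (Finset.mem_univ i)
      have hterm := (Finset.sum_eq_zero_iff_of_nonneg fun j' _ =>
        mul_nonneg (nonneg_of_mem_doublyStochastic hS) (norm_nonneg _)).mp hin
        j (Finset.mem_univ j)
      rcases mul_eq_zero.mp hterm with h | h
      · exact absurd h hij
      · exact sub_eq_zero.mp (norm_eq_zero.mp h)
    exact wl_of_fractional G H S hS hAS hfeat
  · exact fractional_of_wl G H
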